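/- Let H^i_k ∈ ℂ (i ≥ 1, k ≥ 0) and let p_i = z^i + H^i_0 + ∑_{k≥1} H^i_k z^{−k} be the Σ₁ family. Suppose the family {p_i}_{i≥1} is multiplicatively closed and z² p_i lies in the ℂ-linear span of the family for every i ≥ 1. Then H^{2n}_k = 0 for all n ≥ 1 and k ≥ 1, and H^{2n}_0 = −(−H²₀)^n for all n ≥ 1; that is, p_{2n} = z^{2n} − (−H²₀)^n for all n ≥ 1. -/

import Mathlib

noncomputable section

/-- `z^j` viewed as a formal Laurent series in `t = z⁻¹` (so `z^j = t^(-j)`). -/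
def zp (j : ℤ) : LaurentSeries ℂ := HahnSeries.single (-j) 1

/-- The `Σ₁` family `p_i = z^i + H^i_0 + ∑_{k ≥ 1} H^i_k z^(-k)`, `i ≥ 1`. -/
def sigma1 (H : ℕ → ℕ → ℂ) (i : ℕ) : LaurentSeries ℂ :=
  zp i + HahnSeries.ofPowerSeries ℤ ℂ (PowerSeries.mk fun k => H i k)

/-- The coefficient extraction as a linear map. -/
def coeffHom (n : ℤ) : LaurentSeries ℂ →ₗ[ℂ] ℂ where
  toFun x := x.coeff n
  map_add' _ _ := HahnSeries.coeff_add
  map_smul' _ _ := HahnSeries.coeff_smul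

lemma ofPS_coeff_neg (f : PowerSeries ℂ) {n : ℤ} (hn : n < 0) :
    (HahnSeries.ofPowerSeries ℤ ℂ f).coeff n = 0 := by
  rw [HahnSeries.ofPowerSeries_apply]
  apply HahnSeries.embDomain_notin_range
  rintro ⟨m, hm⟩
  have h' : (m : ℤ) = n := hm
  omega

lemma sigma1_coeff_neg (H : ℕ → ℕ → ℂ) (i m : ℕ) (hm : 1 ≤ m) :
    (sigma1 H i).coeff (-(m : ℤ)) = if i = m then 1 else 0 := by
  rw [sigma1, HahnSeries.coeff_add, ofPS_coeff_neg _ (by omega), add_zero, zp]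
  rw [HahnSeries.coeff_single]
  by_cases h : i = m
  · rw [if_pos (by omega), if_pos h]
  · rw [if_neg (by omega), if_neg h]

lemma sigma1_coeff_low (H : ℕ → ℕ → ℂ) (i : ℕ) {b : ℤ} (hb : b < -(i : ℤ)) :
    (sigma1 H i).coeff b = 0 := by
  rw [sigma1, HahnSeries.coeff_add, ofPS_coeff_neg _ (by omega), add_zero, zp,
    HahnSeries.coeff_single, if_neg (by omega)]

lemma span_rep (H : ℕ → ℕ → ℂ) {q : LaurentSeries ℂ}
    (hq : q ∈ Submodule.span ℂ (sigma1 H '' {i | 1 ≤ i})) :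
    ∃ l : ℕ →₀ ℂ, (∀ i ∈ l.support, 1 ≤ i) ∧
      Finsupp.linearCombination ℂ (sigma1 H) l = q ∧
      ∀ m : ℕ, 1 ≤ m → l m = q.coeff (-(m : ℤ)) := by
  obtain ⟨l, hl, rfl⟩ := (Finsupp.mem_span_image_iff_linearCombination ℂ).1 hq
  refine ⟨l, fun i hi => hl hi, rfl, fun m hm => ?_⟩
  have : (Finsupp.linearCombination ℂ (sigma1 H) l).coeff (-(m : ℤ)) =
      coeffHom (-(m : ℤ)) (Finsupp.linearCombination ℂ (sigma1 H) l) := rfl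
  rw [this, Finsupp.linearCombination_apply, Finsupp.sum, map_sum]
  symm
  simp only [coeffHom, LinearMap.coe_mk, AddHom.coe_mk, HahnSeries.coeff_smul]
  rw [Finset.sum_eq_single m]
  · rw [sigma1_coeff_neg H m m hm, if_pos rfl, smul_eq_mul, mul_one]
  · intro j _ hne
    rw [sigma1_coeff_neg H j m hm, if_neg hne, smul_zero]
  · intro hm'
    rw [Finsupp.notMem_support_iff.1 hm', zero_smul]

lemma span_zero (H : ℕ → ℕ → ℂ) {q : LaurentSeries ℂ}
    (hq : q ∈ Submodule.span ℂ (sigma1 H '' {i | 1 ≤ i}))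
    (h0 : ∀ m : ℕ, 1 ≤ m → q.coeff (-(m : ℤ)) = 0) : q = 0 := by
  obtain ⟨l, hsupp, rfl, hcoeff⟩ := span_rep H hq
  have hl : l = 0 := by
    ext m
    rcases Nat.eq_zero_or_pos m with h | h
    · subst h
      by_contra hne
      exact absurd (hsupp 0 (Finsupp.mem_support_iff.2 hne)) (by norm_num)
    · rw [hcoeff m h, h0 m h]; rfl
  rw [hl, map_zero]


lemma sigma1_H_of_eq (H : ℕ → ℕ → ℂ) (i : ℕ) (d : ℂ)
    (h : sigma1 H i = zp i + HahnSeries.C d) : ∀ k : ℕ, H i k = if k = 0 then d else 0 := by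
  rw [sigma1] at h
  have h2 := add_left_cancel h
  rw [← HahnSeries.ofPowerSeries_C] at h2
  have h3 := HahnSeries.ofPowerSeries_injective h2
  intro k
  have h4 := congrArg (PowerSeries.coeff k) h3
  simpa [PowerSeries.coeff_mk, PowerSeries.coeff_C] using h4

theorem sigma1_even_elements (H : ℕ → ℕ → ℂ)
    (hmul : ∀ i j : ℕ, 1 ≤ i → 1 ≤ j →
      sigma1 H i * sigma1 H j ∈ Submodule.span ℂ (sigma1 H '' {i | 1 ≤ i}))
    (hz2 : ∀ i : ℕ, 1 ≤ i →
      zp 2 * sigma1 H i ∈ Submodule.span ℂ (sigma1 H '' {i | 1 ≤ i})) :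
    (∀ n k : ℕ, 1 ≤ n → 1 ≤ k → H (2*n) k = 0) ∧
    (∀ n : ℕ, 1 ≤ n → H (2*n) 0 = -(-H 2 0)^n) ∧
    (∀ n : ℕ, 1 ≤ n → sigma1 H (2*n) = zp (2*n) - HahnSeries.C ((-H 2 0)^n)) := by
  classical
  set c := H 2 0 with hc
  have hmem1 : sigma1 H 1 ∈ Submodule.span ℂ (sigma1 H '' {i | 1 ≤ i}) :=
    Submodule.subset_span ⟨1, by simp, rfl⟩
  set r : LaurentSeries ℂ := sigma1 H 2 - zp 2 - HahnSeries.C c with hr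
  have hrcoeff : ∀ n : ℤ, n ≤ 0 → r.coeff n = 0 := by
    intro n hn
    have hrn : r.coeff n =
        (HahnSeries.ofPowerSeries ℤ ℂ (PowerSeries.mk fun k => H 2 k)).coeff n
          - (HahnSeries.C c).coeff n := by
      rw [hr, sigma1]
      rw [HahnSeries.coeff_sub, HahnSeries.coeff_sub, HahnSeries.coeff_add]
      ring
    rw [hrn]
    rcases lt_or_eq_of_le hn with h | h
    · rw [ofPS_coeff_neg _ h, HahnSeries.C_apply, HahnSeries.coeff_single,
        if_neg (by omega), sub_zero]
    · subst h
      have h0 : ((HahnSeries.ofPowerSeries ℤ ℂ (PowerSeries.mk fun k => H 2 k)).coeff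
          ((0 : ℕ) : ℤ)) = H 2 0 := by
        rw [HahnSeries.ofPowerSeries_apply_coeff, PowerSeries.coeff_mk]
      rw [show (0 : ℤ) = ((0 : ℕ) : ℤ) by norm_num, h0, HahnSeries.C_apply]
      rw [show (((0 : ℕ) : ℤ)) = (0 : ℤ) by norm_num, HahnSeries.coeff_single_same]
      rw [hc]
      ring
  have hq : r * sigma1 H 1 ∈ Submodule.span ℂ (sigma1 H '' {i | 1 ≤ i}) := by
    have hrw : r * sigma1 H 1 =
        sigma1 H 2 * sigma1 H 1 - zp 2 * sigma1 H 1 - c • sigma1 H 1 := by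
      rw [hr, ← HahnSeries.C_mul_eq_smul]
      ring
    rw [hrw]
    exact Submodule.sub_mem _ (Submodule.sub_mem _ (hmul 2 1 (by norm_num) le_rfl)
      (hz2 1 le_rfl)) (Submodule.smul_mem _ c hmem1)
  have hqc : ∀ m : ℕ, 1 ≤ m → (r * sigma1 H 1).coeff (-(m : ℤ)) = 0 := by
    intro m hm
    rw [HahnSeries.coeff_mul]
    apply Finset.sum_eq_zero
    intro ij hij
    rw [Finset.mem_addAntidiagonal] at hij
    obtain ⟨h1, h2, h3⟩ := hij
    exfalso
    have ha : 1 ≤ ij.1 := by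
      by_contra hcon
      exact h1 (hrcoeff ij.1 (by omega))
    have hb : -(1 : ℤ) ≤ ij.2 := by
      by_contra hcon
      exact h2 (sigma1_coeff_low H 1 (by push_cast; omega))
    omega
  have hq0 : r * sigma1 H 1 = 0 := span_zero H hq hqc
  have hp1 : sigma1 H 1 ≠ 0 := by
    intro h
    have h1 := sigma1_coeff_neg H 1 1 le_rfl
    rw [h] at h1
    simp at h1
  have hr0 : r = 0 := by
    rcases mul_eq_zero.1 hq0 with h | h
    · exact h
    · exact absurd h hp1
  have h2eq : sigma1 H 2 = zp 2 + HahnSeries.C c := by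
    rw [hr, sub_sub, sub_eq_zero] at hr0
    rw [hr0]
  have key : ∀ n : ℕ, 1 ≤ n → sigma1 H (2*n) = zp (2*n) - HahnSeries.C ((-c)^n) := by
    intro n hn
    induction n, hn using Nat.le_induction with
    | base =>
      rw [show (2*1 : ℕ) = 2 by norm_num, h2eq, pow_one, map_neg, sub_neg_eq_add]
      norm_num
    | succ n hn ih =>
      have hmem := hz2 (2*n) (by omega)
      obtain ⟨l, hsupp, hlc, hcoeff⟩ := span_rep H hmem
      set e := (-c)^n with he
      have hq0' : zp 2 * sigma1 H (2*n) =
          HahnSeries.single (-(2*(n : ℤ)+2)) 1 - HahnSeries.single (-2 : ℤ) e := by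
        rw [ih, mul_sub, zp, zp, HahnSeries.C_apply, HahnSeries.single_mul_single,
          HahnSeries.single_mul_single, one_mul, one_mul]
        congr 1
        congr 1
        push_cast
        ring
      have hlval : l = Finsupp.single (2*n+2) 1 - Finsupp.single 2 e := by
        ext m
        rcases Nat.eq_zero_or_pos m with h | h
        · subst h
          have hl0 : l 0 = 0 := by
            by_contra hne
            exact absurd (hsupp 0 (Finsupp.mem_support_iff.2 hne)) (by norm_num)
          rw [hl0, Finsupp.sub_apply, Finsupp.single_apply, Finsupp.single_apply,
            if_neg (by omega), if_neg (by omega), sub_zero]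
        · rw [hcoeff m h, hq0', HahnSeries.coeff_sub, HahnSeries.coeff_single,
            HahnSeries.coeff_single, Finsupp.sub_apply, Finsupp.single_apply,
            Finsupp.single_apply]
          by_cases h1 : m = 2*n+2
          · rw [if_pos (by omega), if_neg (by omega), if_pos (by omega), if_neg (by omega)]
          · by_cases h2 : m = 2
            · rw [if_neg (by omega), if_pos (by omega), if_neg (by omega), if_pos (by omega)]
            · rw [if_neg (by omega), if_neg (by omega), if_neg (by omega), if_neg (by omega)]
      have hfin : sigma1 H (2*n+2) - e • sigma1 H 2 =
          HahnSeries.single (-(2*(n : ℤ)+2)) 1 - HahnSeries.single (-2 : ℤ) e := by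
        rw [← hq0', ← hlc, hlval, map_sub, Finsupp.linearCombination_single,
          Finsupp.linearCombination_single, one_smul]
      have hsm : e • sigma1 H 2 = HahnSeries.single (-2 : ℤ) e + HahnSeries.C (e * c) := by
        rw [h2eq, smul_add, zp, ← HahnSeries.C_mul_eq_smul, ← HahnSeries.C_mul_eq_smul,
          HahnSeries.C_apply, HahnSeries.C_apply, HahnSeries.single_mul_single,
          HahnSeries.single_mul_single, zero_add, zero_add, mul_one, HahnSeries.C_apply]
      have h5 : sigma1 H (2*(n+1)) = HahnSeries.single (-(2*(n : ℤ)+2)) 1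
          + HahnSeries.C (e * c) := by
        rw [show 2*(n+1) = 2*n+2 by ring]
        have := sub_eq_iff_eq_add.1 hfin
        rw [this, hsm]
        ring
      rw [h5, zp]
      have hcast : (-(2*((n : ℤ))+2)) = -(2*(((n:ℕ)+1 : ℕ) : ℤ)) := by push_cast; ring
      rw [hcast, show ((-c)^(n+1) : ℂ) = -(e * c) by rw [he, pow_succ]; ring, map_neg,
        sub_neg_eq_add]
  have heq : ∀ n : ℕ, 1 ≤ n → sigma1 H (2*n) = zp (2*n) + HahnSeries.C (-(-c)^n) := by
    intro n hn
    rw [key n hn, map_neg, ← sub_eq_add_neg]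
  refine ⟨?_, ?_, key⟩
  · intro n k hn hk
    rw [sigma1_H_of_eq H (2*n) (-(-c)^n) (heq n hn) k, if_neg (by omega)]
  · intro n hn
    rw [sigma1_H_of_eq H (2*n) (-(-c)^n) (heq n hn) 0, if_pos rfl]


end
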